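/- Let f : ℝ^n → ℝ be continuous with f(z) = -Q(z) + O(|z|³) near 0, where Q(z) = ∑_{i=1}^l λ_i²(z_{2i-1}² + z_{2i}²) with all λ_i ≠ 0 and n = 2l. Suppose g : ℝ^n → ℝ is continuous with g(0) = c. Then lim_{R→∞} ∫_{|z_i| ≤ ε√R} exp(R·f(z/√R)) g(z/√R) dz = c · ∫_{ℝ^n} exp(-Q(z)) dz, provided there is a constant κ > 0 with R·f(z/√R) ≤ -κ|z|² for all |z_i| ≤ ε√R and R ≥ 1. -/

import Mathlib

open MeasureTheory Real Filter

private lemma sqrt_tendsto_atTop : Tendsto Real.sqrt atTop atTop := by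
  refine tendsto_atTop_atTop.mpr fun b => ⟨(max b 0) ^ 2, fun a ha => ?_⟩
  have h := Real.sqrt_le_sqrt ha
  rw [Real.sqrt_sq (le_max_right _ _)] at h
  exact le_trans (le_max_left _ _) h

/-- Laplace-type asymptotics: under a uniform Gaussian domination, the rescaled
integrals of `exp(R f(z/√R)) g(z/√R)` over cubes of side `2ε√R` converge to
`g(0)` times the Gaussian integral `∫ exp(-Q)`. -/
theorem laplace_asymptotics
    (l : ℕ) (hl : 0 < l) (lam : Fin l → ℝ) (hlam : ∀ i, lam i ≠ 0)
    (Q : (Fin (2 * l) → ℝ) → ℝ)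
    (hQ : ∀ z, Q z = ∑ i : Fin l, (lam i) ^ 2 *
        ((z ⟨2 * i.val, by have := i.isLt; omega⟩) ^ 2 +
         (z ⟨2 * i.val + 1, by have := i.isLt; omega⟩) ^ 2))
    (f g : (Fin (2 * l) → ℝ) → ℝ) (hf : Continuous f) (hg : Continuous g)
    (c : ℝ) (hgc : g 0 = c)
    (hcubic : ∃ C δ : ℝ, 0 < δ ∧ ∀ z : Fin (2 * l) → ℝ,
        ‖z‖ ≤ δ → |f z + Q z| ≤ C * ‖z‖ ^ 3)
    (ε : ℝ) (hε : 0 < ε)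
    (κ : ℝ) (hκ : 0 < κ)
    (hdom : ∀ R : ℝ, 1 ≤ R → ∀ z : Fin (2 * l) → ℝ,
        (∀ i, |z i| ≤ ε * Real.sqrt R) →
        R * f (fun i => z i / Real.sqrt R) ≤ -κ * ∑ i, (z i) ^ 2) :
    Tendsto (fun R : ℝ =>
        ∫ z in {z : Fin (2 * l) → ℝ | ∀ i, |z i| ≤ ε * Real.sqrt R},
          Real.exp (R * f (fun i => z i / Real.sqrt R)) *
            g (fun i => z i / Real.sqrt R))
      atTop
      (nhds (c * ∫ z : Fin (2 * l) → ℝ, Real.exp (-(Q z)))) := by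
  classical
  obtain ⟨C, δ, hδ, hC⟩ := hcubic
  -- measurability of the cubes
  have hmeasS : ∀ a : ℝ, MeasurableSet {z : Fin (2 * l) → ℝ | ∀ i, |z i| ≤ a} := by
    intro a
    have h : {z : Fin (2 * l) → ℝ | ∀ i, |z i| ≤ a} =
        Set.pi Set.univ (fun _ => Set.Icc (-a) a) := by
      ext z
      simp [Set.mem_pi, abs_le, Pi.le_def, forall_and]
    rw [h]
    exact MeasurableSet.univ_pi fun _ => measurableSet_Icc
  -- bound on g over the ε-cube
  obtain ⟨M, hM⟩ : ∃ M, ∀ w : Fin (2 * l) → ℝ, (∀ i, |w i| ≤ ε) → |g w| ≤ M := by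
    have hK : IsCompact (Set.pi Set.univ (fun _ : Fin (2 * l) => Set.Icc (-ε) ε)) :=
      isCompact_univ_pi fun _ => isCompact_Icc
    obtain ⟨M, hM⟩ := hK.exists_bound_of_continuousOn hg.continuousOn
    refine ⟨M, fun w hw => ?_⟩
    have hw' : w ∈ Set.pi Set.univ (fun _ : Fin (2 * l) => Set.Icc (-ε) ε) := by
      intro i _
      exact Set.mem_Icc.mpr (abs_le.mp (hw i))
    simpa [Real.norm_eq_abs] using hM w hw'
  have hM0 : 0 ≤ M := le_trans (abs_nonneg _) (hM 0 (fun i => by simp [le_of_lt hε]))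
  -- homogeneity of Q
  have hQhom : ∀ (R : ℝ), 0 < R → ∀ z : Fin (2 * l) → ℝ,
      R * Q (fun i => z i / Real.sqrt R) = Q z := by
    intro R hR z
    have hs : Real.sqrt R ^ 2 = R := Real.sq_sqrt hR.le
    have hs0 : Real.sqrt R ≠ 0 := by positivity
    rw [hQ, hQ, Finset.mul_sum]
    refine Finset.sum_congr rfl fun i _ => ?_
    field_simp
    rw [hs]; ring
  -- the indicator functions
  set F : ℝ → (Fin (2 * l) → ℝ) → ℝ := fun R =>
    Set.indicator {z : Fin (2 * l) → ℝ | ∀ i, |z i| ≤ ε * Real.sqrt R}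
      (fun z => Real.exp (R * f fun i => z i / Real.sqrt R) *
        g fun i => z i / Real.sqrt R) with hF
  have key : Tendsto (fun R : ℝ => ∫ z : Fin (2 * l) → ℝ, F R z) atTop
      (nhds (∫ z : Fin (2 * l) → ℝ, Real.exp (-(Q z)) * c)) := by
    apply tendsto_integral_filter_of_dominated_convergence
        (fun z : Fin (2 * l) → ℝ => M * Real.exp (-κ * ∑ i, z i ^ 2))
    · -- measurability
      filter_upwards with R
      have hcont : Continuous (fun z : Fin (2 * l) → ℝ =>
          Real.exp (R * f fun i => z i / Real.sqrt R) * g fun i => z i / Real.sqrt R) := by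
        have h1 : Continuous (fun z : Fin (2 * l) → ℝ => fun i => z i / Real.sqrt R) :=
          continuous_pi fun i => (continuous_apply i).div_const _
        exact ((Real.continuous_exp.comp ((continuous_const.mul (hf.comp h1)))).mul
          (hg.comp h1))
      exact (hcont.aestronglyMeasurable).indicator (hmeasS _)
    · -- domination
      filter_upwards [eventually_ge_atTop (1 : ℝ)] with R hR
      refine Eventually.of_forall fun z => ?_
      have hsR : 1 ≤ Real.sqrt R := by
        rw [show (1 : ℝ) = Real.sqrt 1 by simp]
        exact Real.sqrt_le_sqrt hR
      have hsR0 : 0 < Real.sqrt R := lt_of_lt_of_le one_pos hsR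
      by_cases hz : z ∈ {z : Fin (2 * l) → ℝ | ∀ i, |z i| ≤ ε * Real.sqrt R}
      · simp only [hF, Set.indicator_of_mem hz]
        have hg' : |g fun i => z i / Real.sqrt R| ≤ M := by
          refine hM _ fun i => ?_
          rw [abs_div, abs_of_pos hsR0, div_le_iff₀ hsR0]
          exact hz i
        have hexp : Real.exp (R * f fun i => z i / Real.sqrt R) ≤
            Real.exp (-κ * ∑ i, z i ^ 2) :=
          Real.exp_le_exp.mpr (hdom R hR z hz)
        calc ‖Real.exp (R * f fun i => z i / Real.sqrt R) * g fun i => z i / Real.sqrt R‖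
            = Real.exp (R * f fun i => z i / Real.sqrt R) *
              |g fun i => z i / Real.sqrt R| := by
              rw [norm_mul, Real.norm_eq_abs, Real.norm_eq_abs,
                abs_of_pos (Real.exp_pos _)]
          _ ≤ Real.exp (-κ * ∑ i, z i ^ 2) * M := by
              exact mul_le_mul hexp hg' (abs_nonneg _) (le_of_lt (Real.exp_pos _))
          _ = M * Real.exp (-κ * ∑ i, z i ^ 2) := mul_comm _ _
      · simp only [hF, Set.indicator_of_notMem hz, norm_zero]
        positivity
    · -- integrability of the bound
      have h2 : Integrable (fun z : Fin (2 * l) → ℝ => ∏ i, Real.exp (-κ * (z i) ^ 2)) :=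
        Integrable.fintype_prod fun _ => integrable_exp_neg_mul_sq hκ
      have he : (fun z : Fin (2 * l) → ℝ => M * Real.exp (-κ * ∑ i, z i ^ 2)) =
          fun z => M * ∏ i, Real.exp (-κ * (z i) ^ 2) := by
        funext z
        rw [← Real.exp_sum, Finset.mul_sum]
      rw [he]
      exact h2.const_mul M
    · -- pointwise convergence
      refine Eventually.of_forall fun z => ?_
      have hsqrt := sqrt_tendsto_atTop
      have hcoord : Tendsto (fun R : ℝ => (fun i => z i / Real.sqrt R)) atTop
          (nhds (0 : Fin (2 * l) → ℝ)) := by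
        rw [tendsto_pi_nhds]
        intro i
        simpa using Tendsto.div_atTop (tendsto_const_nhds (x := z i)) hsqrt
      have hgz : Tendsto (fun R : ℝ => g fun i => z i / Real.sqrt R) atTop (nhds c) := by
        rw [← hgc]
        exact (hg.tendsto 0).comp hcoord
      -- the exponent tends to -(Q z)
      have hexp : Tendsto (fun R : ℝ => R * f fun i => z i / Real.sqrt R) atTop
          (nhds (-(Q z))) := by
        have hbound : ∀ᶠ R : ℝ in atTop,
            ‖(R * f fun i => z i / Real.sqrt R) + Q z‖ ≤ C * ‖z‖ ^ 3 / Real.sqrt R := by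
          have hev : ∀ᶠ R : ℝ in atTop, ‖z‖ / Real.sqrt R ≤ δ := by
            rcases eq_or_lt_of_le (norm_nonneg z) with h0 | h0
            · filter_upwards [eventually_gt_atTop (0 : ℝ)] with R hR
              rw [← h0]
              simpa using hδ.le
            · have := hsqrt.eventually_ge_atTop (‖z‖ / δ)
              filter_upwards [this, eventually_gt_atTop (0 : ℝ)] with R h1 h2
              have hsR0 : 0 < Real.sqrt R := Real.sqrt_pos.mpr h2
              rw [div_le_iff₀ hsR0]
              calc ‖z‖ = (‖z‖ / δ) * δ := by field_simp
                _ ≤ Real.sqrt R * δ := by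
                    exact mul_le_mul_of_nonneg_right h1 hδ.le
                _ = δ * Real.sqrt R := mul_comm _ _
          filter_upwards [hev, eventually_ge_atTop (1 : ℝ)] with R hRδ hR1
          have hR0 : 0 < R := lt_of_lt_of_le one_pos hR1
          have hsR0 : 0 < Real.sqrt R := Real.sqrt_pos.mpr hR0
          set w : Fin (2 * l) → ℝ := fun i => z i / Real.sqrt R with hw
          have hwsmul : w = (Real.sqrt R)⁻¹ • z := by
            funext i
            simp [hw, div_eq_inv_mul]
          have hnw : ‖w‖ = ‖z‖ / Real.sqrt R := by
            rw [hwsmul, norm_smul, norm_inv, Real.norm_eq_abs, abs_of_pos hsR0,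
              div_eq_inv_mul]
          have hwδ : ‖w‖ ≤ δ := by rw [hnw]; exact hRδ
          have h1 : |f w + Q w| ≤ C * ‖w‖ ^ 3 := hC w hwδ
          have h2 : (R * f w) + Q z = R * (f w + Q w) := by
            rw [mul_add, hQhom R hR0 z]
          rw [Real.norm_eq_abs, h2, abs_mul, abs_of_pos hR0]
          have h3 : R * |f w + Q w| ≤ R * (C * ‖w‖ ^ 3) :=
            mul_le_mul_of_nonneg_left h1 hR0.le
          refine le_trans h3 (le_of_eq ?_)
          have hs : Real.sqrt R ^ 2 = R := Real.sq_sqrt hR0.le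
          rw [hnw, div_pow, show Real.sqrt R ^ 3 = R * Real.sqrt R by
            rw [pow_succ, hs]]
          rw [eq_div_iff hsR0.ne']
          field_simp [hR0.ne', hsR0.ne']
        have hzero : Tendsto (fun R : ℝ => C * ‖z‖ ^ 3 / Real.sqrt R) atTop (nhds 0) :=
          Tendsto.div_atTop tendsto_const_nhds hsqrt
        have := squeeze_zero_norm' hbound hzero
        have h4 := this.sub_const (Q z)
        simpa using h4
      have hmul : Tendsto (fun R : ℝ =>
          Real.exp (R * f fun i => z i / Real.sqrt R) * g fun i => z i / Real.sqrt R)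
          atTop (nhds (Real.exp (-(Q z)) * c)) :=
        ((Real.continuous_exp.tendsto _).comp hexp).mul hgz
      -- eventually the indicator equals the function
      have hev : ∀ᶠ R : ℝ in atTop, F R z =
          Real.exp (R * f fun i => z i / Real.sqrt R) * g fun i => z i / Real.sqrt R := by
        have h1 : Tendsto (fun R : ℝ => ε * Real.sqrt R) atTop atTop :=
          Tendsto.const_mul_atTop hε hsqrt
        filter_upwards [h1.eventually_ge_atTop ‖z‖] with R hR
        refine Set.indicator_of_mem ?_ _
        intro i
        calc |z i| = ‖z i‖ := rfl
          _ ≤ ‖z‖ := norm_le_pi_norm z i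
          _ ≤ ε * Real.sqrt R := hR
      exact Tendsto.congr' (hev.mono fun R hR => hR.symm) hmul
  -- conclude
  have heq : (fun R : ℝ =>
      ∫ z in {z : Fin (2 * l) → ℝ | ∀ i, |z i| ≤ ε * Real.sqrt R},
        Real.exp (R * f (fun i => z i / Real.sqrt R)) *
          g (fun i => z i / Real.sqrt R)) =
      fun R : ℝ => ∫ z : Fin (2 * l) → ℝ, F R z := by
    funext R
    rw [hF, integral_indicator (hmeasS _)]
  rw [heq]
  have hval : (∫ z : Fin (2 * l) → ℝ, Real.exp (-(Q z)) * c) =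
      c * ∫ z : Fin (2 * l) → ℝ, Real.exp (-(Q z)) := by
    rw [integral_mul_const, mul_comm]
  rw [← hval]
  exact key
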